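/- Let (z_k, u_k, v_k) for k = 1,…,M with z_k distinct points in the upper half-plane and u_k, v_k ∈ ℂ, and suppose there exists a finite positive measure μ on [0,∞) with G(z) = ∫₀^∞ dμ(t)/(t-z) satisfying G(z_k)u_k = v_k for all k. Then the M×M Hermitian matrix S₁ with entries (S₁)_{ij} = (ū_i v_j − v̄_i u_j)/(z_j − z̄_i) is positive semidefinite. -/

import Mathlib

open MeasureTheory ComplexOrder

private lemma pick_integrable_aux {μ : Measure ℝ} [IsFiniteMeasure μ] {f : ℝ → ℂ}
    (hc : Continuous f) (C : ℝ) (hC : ∀ t, ‖f t‖ ≤ C) : Integrable f μ :=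
  ⟨hc.aestronglyMeasurable, HasFiniteIntegral.of_bounded (ae_of_all _ hC)⟩

private lemma pick_ne_zero {w : ℂ} (hw : w.im ≠ 0) (t : ℝ) : (t : ℂ) - w ≠ 0 := by
  intro h
  have : ((t : ℂ) - w).im = 0 := by rw [h]; simp
  simp at this
  exact hw this

private lemma pick_inv_bound {w : ℂ} (hw : w.im ≠ 0) (t : ℝ) :
    ‖((t : ℂ) - w)⁻¹‖ ≤ |w.im|⁻¹ := by
  rw [norm_inv]
  apply inv_anti₀ (abs_pos.mpr hw)
  calc |w.im| = |((t : ℂ) - w).im| := by simp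
    _ ≤ ‖(t : ℂ) - w‖ := Complex.abs_im_le_norm _
    _ = ‖(t : ℂ) - w‖ := rfl

private lemma pick_cont {w : ℂ} (hw : w.im ≠ 0) :
    Continuous (fun t : ℝ => ((t : ℂ) - w)⁻¹) :=
  (Continuous.sub Complex.continuous_ofReal continuous_const).inv₀ (pick_ne_zero hw)

theorem pick_matrix_psd (M : ℕ) (z u v : Fin M → ℂ)
    (hz : Function.Injective z) (hzim : ∀ k, 0 < (z k).im)
    (μ : Measure ℝ) [IsFiniteMeasure μ] (hsupp : μ (Set.Iio 0) = 0)
    (hinterp : ∀ k, (∫ t, 1 / ((t : ℂ) - z k) ∂μ) * u k = v k) :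
    (Matrix.of (fun i j : Fin M =>
      (star (u i) * v j - star (v i) * u j) / (z j - star (z i)))).PosSemidef := by
  classical
  set f : Fin M → ℝ → ℂ := fun k t => u k * ((t : ℂ) - z k)⁻¹ with hf
  have him : ∀ k, (z k).im ≠ 0 := fun k => (hzim k).ne'
  have himc : ∀ k, (starRingEnd ℂ (z k)).im ≠ 0 := fun k => by
    simpa using (hzim k).ne'
  have hfc : ∀ k, Continuous (f k) := fun k =>
    continuous_const.mul (pick_cont (him k))
  have hfb : ∀ k t, ‖f k t‖ ≤ ‖u k‖ * |(z k).im|⁻¹ := by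
    intro k t
    rw [hf]
    simp only [norm_mul]
    exact mul_le_mul_of_nonneg_left (pick_inv_bound (him k) t) (norm_nonneg _)
  have hfint : ∀ k, Integrable (f k) μ := fun k =>
    pick_integrable_aux (hfc k) _ (hfb k)
  have hprodint : ∀ i j, Integrable (fun t => starRingEnd ℂ (f i t) * f j t) μ := by
    intro i j
    refine pick_integrable_aux ((Complex.continuous_conj.comp (hfc i)).mul (hfc j))
      ((‖u i‖ * |(z i).im|⁻¹) * (‖u j‖ * |(z j).im|⁻¹)) ?_
    intro t
    rw [norm_mul, RCLike.norm_conj]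
    exact mul_le_mul (hfb i t) (hfb j t) (norm_nonneg _)
      (mul_nonneg (norm_nonneg _) (by positivity))
  have hzne : ∀ i j, z j - starRingEnd ℂ (z i) ≠ 0 := by
    intro i j h
    have : (z j - starRingEnd ℂ (z i)).im = 0 := by rw [h]; simp
    simp only [Complex.sub_im, Complex.conj_im] at this
    nlinarith [hzim i, hzim j]
  -- key entry formula
  have keyc : ∀ i j, (starRingEnd ℂ (u i) * v j - starRingEnd ℂ (v i) * u j) /
      (z j - starRingEnd ℂ (z i)) = ∫ t, starRingEnd ℂ (f i t) * f j t ∂μ := by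
    intro i j
    have hGint : ∀ k, Integrable (fun t : ℝ => ((t : ℂ) - z k)⁻¹) μ := fun k =>
      pick_integrable_aux (pick_cont (him k)) _ (pick_inv_bound (him k))
    have hGcint : Integrable (fun t : ℝ => ((t : ℂ) - starRingEnd ℂ (z i))⁻¹) μ :=
      pick_integrable_aux (pick_cont (himc i)) _ (pick_inv_bound (himc i))
    have hconjG : starRingEnd ℂ (∫ t, 1 / ((t : ℂ) - z i) ∂μ)
        = ∫ t, ((t : ℂ) - starRingEnd ℂ (z i))⁻¹ ∂μ := by
      rw [← integral_conj]
      congr 1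
      funext t
      rw [one_div, map_inv₀, map_sub, Complex.conj_ofReal]
    have hdiff : (∫ t, 1 / ((t : ℂ) - z j) ∂μ)
          - starRingEnd ℂ (∫ t, 1 / ((t : ℂ) - z i) ∂μ)
        = (z j - starRingEnd ℂ (z i)) *
          ∫ t, ((t : ℂ) - starRingEnd ℂ (z i))⁻¹ * ((t : ℂ) - z j)⁻¹ ∂μ := by
      rw [hconjG, ← integral_const_mul,
        ← integral_sub (by simpa [one_div] using hGint j) hGcint]
      congr 1
      funext t
      have h1 := pick_ne_zero (him j) t
      have h2 := pick_ne_zero (himc i) t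
      rw [one_div, inv_sub_inv h1 h2, div_eq_mul_inv, mul_inv]
      ring
    have hrhs : (∫ t, starRingEnd ℂ (f i t) * f j t ∂μ)
        = starRingEnd ℂ (u i) * u j *
          ∫ t, ((t : ℂ) - starRingEnd ℂ (z i))⁻¹ * ((t : ℂ) - z j)⁻¹ ∂μ := by
      rw [← integral_const_mul]
      congr 1
      funext t
      rw [hf]
      simp only [map_mul, map_inv₀, map_sub, Complex.conj_ofReal]
      ring
    rw [hrhs, div_eq_iff (hzne i j), ← hinterp i, ← hinterp j, map_mul]
    linear_combination (starRingEnd ℂ (u i) * u j) * hdiff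
  rw [Matrix.posSemidef_iff_dotProduct_mulVec]
  constructor
  · -- Hermitian
    ext i j
    simp only [Matrix.conjTranspose_apply, Matrix.of_apply, Complex.star_def]
    rw [keyc j i, keyc i j, ← integral_conj]
    congr 1
    funext t
    simp only [map_mul, Complex.conj_conj]
    ring
  · intro x
    set g : ℝ → ℂ := fun t => ∑ k, x k * f k t with hg
    have hint2 : ∀ i, ∀ j ∈ Finset.univ,
        Integrable (fun t => starRingEnd ℂ (x i) *
          (starRingEnd ℂ (f i t) * f j t * x j)) μ := fun i j _ =>
      ((hprodint i j).mul_const _).const_mul _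
    have hint1 : ∀ i ∈ Finset.univ, Integrable (fun t => ∑ j,
        starRingEnd ℂ (x i) * (starRingEnd ℂ (f i t) * f j t * x j)) μ := fun i _ =>
      integrable_finset_sum _ (hint2 i)
    have hterm : ∀ i j, starRingEnd ℂ (x i) *
        ((∫ t, starRingEnd ℂ (f i t) * f j t ∂μ) * x j)
        = ∫ t, starRingEnd ℂ (x i) * (starRingEnd ℂ (f i t) * f j t * x j) ∂μ := by
      intro i j
      rw [← integral_mul_const, ← integral_const_mul]
    have h2 : (fun t => starRingEnd ℂ (g t) * g t)
        = fun t => ∑ i, ∑ j, starRingEnd ℂ (x i) *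
            (starRingEnd ℂ (f i t) * f j t * x j) := by
      funext t
      rw [hg]
      simp only [map_sum, map_mul, Finset.sum_mul_sum]
      exact Finset.sum_congr rfl fun i _ => Finset.sum_congr rfl fun j _ => by ring
    have h3 : (∫ t, starRingEnd ℂ (g t) * g t ∂μ)
        = ∑ i, ∑ j, ∫ t, starRingEnd ℂ (x i) *
            (starRingEnd ℂ (f i t) * f j t * x j) ∂μ := by
      rw [h2, integral_finset_sum _ hint1]
      exact Finset.sum_congr rfl fun i _ => integral_finset_sum _ (hint2 i)
    have expand : dotProduct (star x) ((Matrix.of (fun i j : Fin M =>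
        (star (u i) * v j - star (v i) * u j) / (z j - star (z i)))).mulVec x)
        = ∑ i, ∑ j, starRingEnd ℂ (x i) *
            ((∫ t, starRingEnd ℂ (f i t) * f j t ∂μ) * x j) := by
      simp only [dotProduct, Matrix.mulVec, Matrix.of_apply, Pi.star_apply,
        Finset.mul_sum, Complex.star_def]
      exact Finset.sum_congr rfl fun i _ => Finset.sum_congr rfl fun j _ => by
        rw [keyc i j]
    have hsum : dotProduct (star x) ((Matrix.of (fun i j : Fin M =>
        (star (u i) * v j - star (v i) * u j) / (z j - star (z i)))).mulVec x)
        = ∫ t, starRingEnd ℂ (g t) * g t ∂μ := by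
      rw [expand]
      simp only [hterm]
      rw [h3]
    rw [hsum]
    have h4 : ∀ t, starRingEnd ℂ (g t) * g t = ((Complex.normSq (g t) : ℝ) : ℂ) := by
      intro t
      rw [mul_comm, Complex.mul_conj]
    simp only [h4]
    have h5 : (∫ t, ((Complex.normSq (g t) : ℝ) : ℂ) ∂μ)
        = ((∫ t, Complex.normSq (g t) ∂μ : ℝ) : ℂ) := integral_ofReal
    rw [h5, Complex.zero_le_real]
    exact integral_nonneg fun t => Complex.normSq_nonneg _
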